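/- Fix an integer n ≥ 2 and reals b₁ > b₂ ≥ … ≥ bₙ > 0, and fix r₂, …, rₙ > 0. Let f = 8π² / ( b₁² · Σ_{i=2}^{n} rᵢ² · ψ_{bᵢ}(2π/b₁) ), where ψ_b(τ) = 3τ − bτ²·cos(bτ/2)/sin(bτ/2) − sin(bτ)/b. Then f is a well-defined strictly positive real number, and the limit as r₁ → 0⁺ of (τ₁(r₁, r₂, …, rₙ) − 2π/b₁)/r₁² equals f; that is, τ₁(r₁, r₂, …, rₙ) = 2π/b₁ + f·r₁² + o(r₁²) as r₁ → 0⁺. -/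

import Mathlib

set_option maxHeartbeats 1000000

open Real Finset Set Filter

/-- The function `ψ_b(τ) = 3τ − b·τ²·cos(bτ/2)/sin(bτ/2) − sin(bτ)/b`. -/
noncomputable def psi (b τ : ℝ) : ℝ :=
  3 * τ - b * τ ^ 2 * Real.cos (b * τ / 2) / Real.sin (b * τ / 2) - Real.sin (b * τ) / b

/-- `ψ(τ, r) = Σ_{i=1}^{n} (rᵢ²/2)·ψ_{bᵢ}(τ)`. -/
noncomputable def psiSum (n : ℕ) (b r : ℕ → ℝ) (τ : ℝ) : ℝ :=
  ∑ i ∈ Finset.Icc 1 n, (r i) ^ 2 / 2 * psi (b i) τ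

/-- `u cos u < sin u` on `(0, π)`. -/
lemma aux_sin_gt (u : ℝ) (h0 : 0 < u) (h1 : u < Real.pi) :
    u * Real.cos u < Real.sin u := by
  rcases lt_or_ge u (Real.pi / 2) with h | h
  · have ht := Real.lt_tan h0 h
    have hc : 0 < Real.cos u := Real.cos_pos_of_mem_Ioo ⟨by linarith [Real.pi_pos], h⟩
    rw [Real.tan_eq_sin_div_cos, lt_div_iff₀ hc] at ht
    linarith
  · have hc : Real.cos u ≤ 0 := Real.cos_nonpos_of_pi_div_two_le_of_le h (by linarith [Real.pi_pos])
    have hs : 0 < Real.sin u := Real.sin_pos_of_pos_of_lt_pi h0 h1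
    nlinarith

noncomputable def Pfun (u : ℝ) : ℝ :=
  6 * u * Real.sin u - 4 * u ^ 2 * Real.cos u - 2 * Real.sin u ^ 2 * Real.cos u

lemma Pfun_hasDeriv (u : ℝ) : HasDerivAt Pfun
    (6 * Real.sin u + 6 * u * Real.cos u - (8 * u * Real.cos u - 4 * u ^ 2 * Real.sin u)
      - (4 * Real.sin u * Real.cos u ^ 2 - 2 * Real.sin u ^ 3)) u := by
  have h1 : HasDerivAt (fun u : ℝ => 6 * u * Real.sin u)
      (6 * Real.sin u + 6 * u * Real.cos u) u := by
    have := (hasDerivAt_id u).const_mul (6:ℝ) |>.mul (Real.hasDerivAt_sin u)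
    exact this.congr_deriv (by simp [id_eq])
  have h2 : HasDerivAt (fun u : ℝ => 4 * u ^ 2 * Real.cos u)
      (8 * u * Real.cos u - 4 * u ^ 2 * Real.sin u) u := by
    have := ((hasDerivAt_pow 2 u).const_mul (4:ℝ)).mul (Real.hasDerivAt_cos u)
    exact this.congr_deriv (by simp; ring)
  have h3 : HasDerivAt (fun u : ℝ => 2 * Real.sin u ^ 2 * Real.cos u)
      (4 * Real.sin u * Real.cos u ^ 2 - 2 * Real.sin u ^ 3) u := by
    have := (((Real.hasDerivAt_sin u).pow 2).const_mul (2:ℝ)).mul (Real.hasDerivAt_cos u)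
    exact this.congr_deriv (by simp; ring)
  exact (h1.sub h2).sub h3

lemma Pfun_pos {u : ℝ} (h0 : 0 < u) (h1 : u ≤ Real.pi) : 0 < Pfun u := by
  have hmono : StrictMonoOn Pfun (Set.Icc 0 Real.pi) := by
    apply strictMonoOn_of_deriv_pos (convex_Icc 0 Real.pi)
    · exact Continuous.continuousOn (by unfold Pfun; continuity)
    · intro x hx
      rw [interior_Icc] at hx
      rw [(Pfun_hasDeriv x).deriv]
      have hsc := aux_sin_gt x hx.1 hx.2
      have hs : 0 < Real.sin x := Real.sin_pos_of_pos_of_lt_pi hx.1 hx.2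
      have hc2 : Real.cos x ^ 2 ≤ 1 := by nlinarith [Real.neg_one_le_cos x, Real.cos_le_one x]
      nlinarith [Real.sin_sq_add_cos_sq x, mul_nonneg hs.le (sub_nonneg.2 hc2),
        mul_nonneg (sq_nonneg x) hs.le]
  have := hmono (Set.left_mem_Icc.2 Real.pi_pos.le) ⟨h0.le, h1⟩ h0
  simpa [Pfun] using this

lemma psi_eq (b τ : ℝ) (hb : b ≠ 0) (hs : Real.sin (b * τ / 2) ≠ 0) :
    psi b τ = Pfun (b * τ / 2) / (b * Real.sin (b * τ / 2)) := by
  have h2 : Real.sin (b * τ) = 2 * Real.sin (b * τ / 2) * Real.cos (b * τ / 2) := by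
    rw [show b * τ = 2 * (b * τ / 2) by ring, Real.sin_two_mul]; norm_num
  rw [psi, Pfun, h2]
  field_simp
  have key : Real.sin (τ * b / 2) * (Real.sin (τ * b / 2))⁻¹ = 1 :=
    mul_inv_cancel₀ (by rwa [mul_comm τ b])
  linear_combination (8 * Real.cos (τ * b / 2) * Real.sin (τ * b / 2) - 12 * τ * b) * key

lemma psi_pos {b τ : ℝ} (hb : 0 < b) (ht : 0 < τ) (h2 : b * τ < 2 * Real.pi) :
    0 < psi b τ := by
  have hu0 : 0 < b * τ / 2 := by positivity
  have hu1 : b * τ / 2 < Real.pi := by linarith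
  have hs : 0 < Real.sin (b * τ / 2) := Real.sin_pos_of_pos_of_lt_pi hu0 hu1
  rw [psi_eq b τ hb.ne' hs.ne']
  exact div_pos (Pfun_pos hu0 hu1.le) (by positivity)

lemma psi_pole {b ε : ℝ} (hb : 0 < b) (h0 : 0 < ε) (h1 : ε ≤ 1) (h2 : ε ≤ 1 / b) :
    |psi b (2 * Real.pi / b + ε) + 8 * Real.pi ^ 2 / (b ^ 2 * ε)| ≤
      3 * (2 * Real.pi / b + 1) + b / 4 * (2 * Real.pi / b + 1) ^ 2 + 1 / b := by
  set τ₀ : ℝ := 2 * Real.pi / b with hτ₀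
  set y : ℝ := b * ε / 2 with hy
  have hπ := Real.pi_pos
  have hτ0pos : 0 < τ₀ := by positivity
  have hy0 : 0 < y := by positivity
  have hbe : b * ε ≤ 1 := by
    have := (le_div_iff₀ hb).mp h2; linarith
  have hy2 : y ≤ 1 / 2 := by rw [hy]; linarith
  have hyπ : y < Real.pi := by linarith [Real.pi_gt_three]
  have hs0 : 0 < Real.sin y := Real.sin_pos_of_pos_of_lt_pi hy0 hyπ
  have hsley : Real.sin y ≤ y := (Real.sin_lt hy0).le
  have hcos : 1 - y ^ 2 / 2 ≤ Real.cos y := Real.one_sub_sq_div_two_le_cos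
  have hcos0 : 0 < Real.cos y := by nlinarith
  have hCu : Real.cos y / Real.sin y ≤ 1 / y := by
    rw [div_le_div_iff₀ hs0 hy0]
    have := aux_sin_gt y hy0 hyπ; linarith
  have hCl : 1 / y - y / 2 ≤ Real.cos y / Real.sin y := by
    have h3 : Real.cos y / y ≤ Real.cos y / Real.sin y :=
      div_le_div_of_nonneg_left hcos0.le hs0 hsley
    have h4 : (1 - y ^ 2 / 2) / y ≤ Real.cos y / y := by gcongr
    have h5 : (1 : ℝ) / y - y / 2 = (1 - y ^ 2 / 2) / y := by field_simp
    linarith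
  have e1 : b * (τ₀ + ε) / 2 = y + Real.pi := by
    rw [hτ₀, hy]; field_simp; ring
  have epsi : psi b (τ₀ + ε) =
      3 * (τ₀ + ε) - b * (τ₀ + ε) ^ 2 * (Real.cos y / Real.sin y)
        - Real.sin (b * (τ₀ + ε)) / b := by
    rw [psi, e1, Real.sin_add_pi, Real.cos_add_pi, mul_neg, neg_div_neg_eq, mul_div_assoc]
  have key1 : b * (τ₀ + ε) ^ 2 * (1 / y) = 2 * τ₀ ^ 2 / ε + 4 * τ₀ + 2 * ε := by
    rw [hy]; field_simp; ring
  have key2 : 8 * Real.pi ^ 2 / (b ^ 2 * ε) = 2 * τ₀ ^ 2 / ε := by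
    rw [hτ₀]; field_simp; ring
  have hq0 : (0:ℝ) ≤ b * (τ₀ + ε) ^ 2 := by positivity
  have hb1 : b * (τ₀ + ε) ^ 2 * (Real.cos y / Real.sin y) ≤ b * (τ₀ + ε) ^ 2 * (1 / y) :=
    mul_le_mul_of_nonneg_left hCu hq0
  have hb2 : b * (τ₀ + ε) ^ 2 * (1 / y) - b * (τ₀ + ε) ^ 2 * (y / 2)
      ≤ b * (τ₀ + ε) ^ 2 * (Real.cos y / Real.sin y) := by
    have h := mul_le_mul_of_nonneg_left hCl hq0
    rw [mul_sub] at h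
    exact h
  have hyb : b * (τ₀ + ε) ^ 2 * (y / 2) ≤ b / 4 * (τ₀ + 1) ^ 2 := by
    rw [hy]
    have h6 : b * (τ₀ + ε) ^ 2 * (b * ε / 2 / 2) = b * ε * (b * (τ₀ + ε) ^ 2) / 4 := by ring
    rw [h6]
    have h7 : (τ₀ + ε) ^ 2 ≤ (τ₀ + 1) ^ 2 := by nlinarith
    have h8 : b * ε * (b * (τ₀ + ε) ^ 2) ≤ 1 * (b * (τ₀ + 1) ^ 2) :=
      mul_le_mul hbe (mul_le_mul_of_nonneg_left h7 hb.le) (by positivity) one_pos.le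
    linarith
  have hsin1 : Real.sin (b * (τ₀ + ε)) / b ≤ 1 / b := by
    gcongr; exact Real.sin_le_one _
  have hsin2 : -(1 / b) ≤ Real.sin (b * (τ₀ + ε)) / b := by
    rw [← neg_div]; gcongr; exact Real.neg_one_le_sin _
  have hB4 : (0:ℝ) ≤ b / 4 * (τ₀ + 1) ^ 2 := by positivity
  rw [key2, abs_le]
  constructor
  · rw [epsi]; linarith
  · rw [epsi]; linarith

lemma psi_contAt {b τ : ℝ} (hs : Real.sin (b * τ / 2) ≠ 0) :
    ContinuousAt (psi b) τ := by
  have h1 : ContinuousAt (fun t : ℝ => 3 * t) τ := by fun_prop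
  have h2 : ContinuousAt (fun t : ℝ => b * t ^ 2 * Real.cos (b * t / 2) / Real.sin (b * t / 2)) τ :=
    ContinuousAt.div (by fun_prop) (by fun_prop) hs
  have h3 : ContinuousAt (fun t : ℝ => Real.sin (b * t) / b) τ := by fun_prop
  exact (h1.sub h2).sub h3

lemma psiSum_contAt {n : ℕ} {b r : ℕ → ℝ} {τ : ℝ}
    (hs : ∀ i ∈ Finset.Icc 1 n, Real.sin (b i * τ / 2) ≠ 0) :
    ContinuousAt (psiSum n b r) τ := by
  unfold psiSum
  refine tendsto_finset_sum _ fun i hi => ?_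
  exact (psi_contAt (hs i hi)).const_mul _

lemma psiSum_pos {n : ℕ} (hn : 1 ≤ n) {b r : ℕ → ℝ} {τ : ℝ} (hτ : 0 < τ)
    (hb : ∀ i ∈ Finset.Icc 1 n, 0 < b i) (hr : ∀ i ∈ Finset.Icc 1 n, 0 < r i)
    (hlt : ∀ i ∈ Finset.Icc 1 n, b i * τ < 2 * Real.pi) : 0 < psiSum n b r τ := by
  refine Finset.sum_pos (fun i hi => ?_) ⟨1, by simp [Finset.mem_Icc]; omega⟩
  exact mul_pos (div_pos (pow_pos (hr i hi) 2) two_pos) (psi_pos (hb i hi) hτ (hlt i hi))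

lemma psiSum_decomp (n : ℕ) (hn : 2 ≤ n) (b r : ℕ → ℝ) (x τ : ℝ) :
    psiSum n b (Function.update r 1 x) τ
      = x ^ 2 / 2 * psi (b 1) τ + (∑ i ∈ Finset.Icc 2 n, r i ^ 2 * psi (b i) τ) / 2 := by
  have hins : Finset.Icc 1 n = insert 1 (Finset.Icc 2 n) := by
    ext i; simp only [Finset.mem_Icc, Finset.mem_insert]; omega
  rw [psiSum, hins, Finset.sum_insert (by simp [Finset.mem_Icc])]
  rw [Function.update_self]
  congr 1
  rw [Finset.sum_div]
  refine Finset.sum_congr rfl fun i hi => ?_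
  have hi1 : i ≠ 1 := by simp only [Finset.mem_Icc] at hi; omega
  rw [Function.update_of_ne hi1]
  ring

/-- Fix `n ≥ 2`, reals `b₁ > b₂ ≥ … ≥ bₙ > 0` and `r₂, …, rₙ > 0`.
Let `f = 8π² / (b₁² · Σ_{i=2}^{n} rᵢ²·ψ_{bᵢ}(2π/b₁))`. Then `f > 0` (in particular it
is well defined) and `(τ₁(r₁, r₂, …, rₙ) − 2π/b₁)/r₁² → f` as `r₁ → 0⁺`; that is,
`τ₁(r₁, r₂, …, rₙ) = 2π/b₁ + f·r₁² + o(r₁²)` as `r₁ → 0⁺`. -/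
theorem statement11 (n : ℕ) (hn : 2 ≤ n) (b : ℕ → ℝ)
    (hpos : ∀ i ∈ Finset.Icc 1 n, 0 < b i)
    (h12 : b 2 < b 1)
    (hanti : ∀ i j, 2 ≤ i → i ≤ j → j ≤ n → b j ≤ b i)
    (tau1 : (ℕ → ℝ) → ℝ)
    (htau1 : ∀ r : ℕ → ℝ, (∀ i ∈ Finset.Icc 1 n, 0 < r i) →
      IsLeast {τ : ℝ | 0 < τ ∧ (∀ i ∈ Finset.Icc 1 n, Real.sin (b i * τ / 2) ≠ 0) ∧
        psiSum n b r τ = 0} (tau1 r))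
    (r : ℕ → ℝ) (hr : ∀ i ∈ Finset.Icc 2 n, 0 < r i) :
    0 < 8 * Real.pi ^ 2 /
        ((b 1) ^ 2 * ∑ i ∈ Finset.Icc 2 n, (r i) ^ 2 * psi (b i) (2 * Real.pi / b 1)) ∧
    Filter.Tendsto
      (fun r₁ : ℝ => (tau1 (Function.update r 1 r₁) - 2 * Real.pi / b 1) / r₁ ^ 2)
      (nhdsWithin 0 (Set.Ioi 0))
      (nhds (8 * Real.pi ^ 2 /
        ((b 1) ^ 2 * ∑ i ∈ Finset.Icc 2 n, (r i) ^ 2 * psi (b i) (2 * Real.pi / b 1)))) := by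
  have hπ := Real.pi_pos
  have h1mem : (1 : ℕ) ∈ Finset.Icc 1 n := by simp [Finset.mem_Icc]; omega
  have h2mem : (2 : ℕ) ∈ Finset.Icc 1 n := by simp [Finset.mem_Icc]; omega
  have hb1 : 0 < b 1 := hpos 1 h1mem
  have hb2 : 0 < b 2 := hpos 2 h2mem
  set τ₀ : ℝ := 2 * Real.pi / b 1 with hτ₀def
  have hτ₀pos : 0 < τ₀ := by positivity
  have hb1τ₀ : b 1 * τ₀ = 2 * Real.pi := by rw [hτ₀def]; field_simp
  set S : ℝ := ∑ i ∈ Finset.Icc 2 n, (r i) ^ 2 * psi (b i) τ₀ with hSdef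
  -- b i bounds
  have hble2 : ∀ i ∈ Finset.Icc 2 n, b i ≤ b 2 := by
    intro i hi
    simp only [Finset.mem_Icc] at hi
    exact hanti 2 i le_rfl hi.1 hi.2
  have hsub : Finset.Icc 2 n ⊆ Finset.Icc 1 n := by
    intro i hi; simp only [Finset.mem_Icc] at *; omega
  have hblt : ∀ i ∈ Finset.Icc 2 n, b i < b 1 := fun i hi => lt_of_le_of_lt (hble2 i hi) h12
  have hble : ∀ i ∈ Finset.Icc 1 n, b i ≤ b 1 := by
    intro i hi
    rcases eq_or_ne i 1 with h | h
    · rw [h]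
    · refine (hblt i ?_).le
      simp only [Finset.mem_Icc] at *; omega
  -- positivity of S
  have hS : 0 < S := by
    refine Finset.sum_pos (fun i hi => ?_) ⟨2, by simp [Finset.mem_Icc]; omega⟩
    refine mul_pos (pow_pos (hr i hi) 2) (psi_pos (hpos i (hsub hi)) hτ₀pos ?_)
    calc b i * τ₀ < b 1 * τ₀ := by
          exact mul_lt_mul_of_pos_right (hblt i hi) hτ₀pos
      _ = 2 * Real.pi := hb1τ₀
  have hf : 0 < 8 * Real.pi ^ 2 / ((b 1) ^ 2 * S) := by positivity
  refine ⟨hf, ?_⟩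
  set f : ℝ := 8 * Real.pi ^ 2 / ((b 1) ^ 2 * S) with hfdef
  -- the tail sum as a function
  set T : ℝ → ℝ := fun τ => ∑ i ∈ Finset.Icc 2 n, (r i) ^ 2 * psi (b i) τ with hTdef
  -- window for nonvanishing sines
  set εs : ℝ := min 1 (min (1 / b 1) ((2 * Real.pi / b 2 - τ₀) / 2)) with hεsdef
  have hδ2 : 0 < 2 * Real.pi / b 2 - τ₀ := by
    have : τ₀ < 2 * Real.pi / b 2 := by
      rw [hτ₀def]
      exact div_lt_div_of_pos_left (by positivity) hb2 h12
    linarith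
  have hεs0 : 0 < εs := by
    refine lt_min one_pos (lt_min (by positivity) (by linarith))
  have hεs1 : εs ≤ 1 := min_le_left _ _
  have hεsb : εs ≤ 1 / b 1 := le_trans (min_le_right _ _) (min_le_left _ _)
  have hεs2 : εs ≤ (2 * Real.pi / b 2 - τ₀) / 2 := le_trans (min_le_right _ _) (min_le_right _ _)
  -- sines are nonvanishing on the window (τ₀, τ₀ + εs]
  have hsinwin : ∀ ε : ℝ, 0 < ε → ε ≤ εs →
      ∀ i ∈ Finset.Icc 1 n, Real.sin (b i * (τ₀ + ε) / 2) ≠ 0 := by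
    intro ε h0 h1 i hi
    rcases eq_or_ne i 1 with h | h
    · rw [h]
      have he : b 1 * (τ₀ + ε) / 2 = b 1 * ε / 2 + Real.pi := by
        rw [hτ₀def]; field_simp; ring
      rw [he, Real.sin_add_pi, neg_ne_zero]
      have hbε : b 1 * ε ≤ 1 := by
        have h2 : ε ≤ 1 / b 1 := le_trans h1 hεsb
        have := (le_div_iff₀ hb1).mp h2; linarith
      refine (Real.sin_pos_of_pos_of_lt_pi (by positivity) ?_).ne'
      linarith [Real.pi_gt_three]
    · have hi2 : i ∈ Finset.Icc 2 n := by simp only [Finset.mem_Icc] at *; omega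
      have hbi : 0 < b i := hpos i hi
      have hlt : b i * (τ₀ + ε) < 2 * Real.pi := by
        have h2 : τ₀ + ε < 2 * Real.pi / b 2 := by
          have := le_trans h1 hεs2; linarith
        calc b i * (τ₀ + ε) ≤ b 2 * (τ₀ + ε) :=
              mul_le_mul_of_nonneg_right (hble2 i hi2) (by linarith)
          _ < b 2 * (2 * Real.pi / b 2) := by
              exact mul_lt_mul_of_pos_left h2 hb2
          _ = 2 * Real.pi := by field_simp
      refine (Real.sin_pos_of_pos_of_lt_pi (by positivity) (by linarith)).ne'
  -- continuity window for T
  have hTcont : ContinuousAt T τ₀ := by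
    rw [hTdef]
    refine tendsto_finset_sum _ fun i hi => ?_
    have hbi : 0 < b i := hpos i (hsub hi)
    have hlt : b i * τ₀ < 2 * Real.pi := by
      calc b i * τ₀ < b 1 * τ₀ := mul_lt_mul_of_pos_right (hblt i hi) hτ₀pos
        _ = 2 * Real.pi := hb1τ₀
    exact (psi_contAt (Real.sin_pos_of_pos_of_lt_pi (by positivity) (by linarith)).ne').const_mul _
  have hTwin : ∀ η : ℝ, 0 < η → ∃ δ : ℝ, 0 < δ ∧ ∀ ε : ℝ, 0 < ε → ε ≤ δ →
      |T (τ₀ + ε) - S| < η := by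
    intro η hη
    obtain ⟨δ, hδ0, hball⟩ := Metric.continuousAt_iff.mp hTcont η hη
    refine ⟨δ / 2, by linarith, fun ε h0 h1 => ?_⟩
    have hd : dist (τ₀ + ε) τ₀ < δ := by
      rw [Real.dist_eq]
      rw [show τ₀ + ε - τ₀ = ε by ring, abs_of_pos h0]
      linarith
    have := hball hd
    rw [Real.dist_eq] at this
    have hTS : T τ₀ = S := rfl
    rwa [hTS] at this
  -- pole bound constant
  set B : ℝ := 3 * (τ₀ + 1) + b 1 / 4 * (τ₀ + 1) ^ 2 + 1 / b 1 with hBdef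
  have hB : 0 < B := by positivity
  have hpole : ∀ ε : ℝ, 0 < ε → ε ≤ εs →
      |psi (b 1) (τ₀ + ε) + 8 * Real.pi ^ 2 / ((b 1) ^ 2 * ε)| ≤ B := by
    intro ε h0 h1
    exact psi_pole hb1 h0 (le_trans h1 hεs1) (le_trans h1 hεsb)
  -- helper L : negativity of psiSum on (τ₀, τ₀ + c r₁²]
  have helperL : ∀ c : ℝ, 0 < c → c < f → ∃ ρ : ℝ, 0 < ρ ∧
      ∀ r₁ : ℝ, 0 < r₁ → r₁ < ρ → ∀ ε : ℝ, 0 < ε → ε ≤ c * r₁ ^ 2 →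
        ε ≤ εs ∧ psiSum n b (Function.update r 1 r₁) (τ₀ + ε) < 0 := by
    intro c hc0 hcf
    have hKc : S < 8 * Real.pi ^ 2 / ((b 1) ^ 2 * c) := by
      have hcf' : c * ((b 1) ^ 2 * S) < 8 * Real.pi ^ 2 := by
        rw [hfdef] at hcf
        exact (lt_div_iff₀ (by positivity)).mp hcf
      rw [lt_div_iff₀ (by positivity)]
      nlinarith [hcf']
    set η : ℝ := (8 * Real.pi ^ 2 / ((b 1) ^ 2 * c) - S) / 2 with hηdef
    have hη : 0 < η := by rw [hηdef]; linarith
    obtain ⟨δ, hδ0, hδ⟩ := hTwin η hη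
    set m : ℝ := min (η / B) (min εs δ / c) with hmdef
    have hm : 0 < m := lt_min (by positivity) (by positivity)
    refine ⟨Real.sqrt m, Real.sqrt_pos.mpr hm, ?_⟩
    intro r₁ h0 h1 ε he0 he1
    have hr₁sq : r₁ ^ 2 < m := (Real.lt_sqrt h0.le).mp h1
    have hBr : B * r₁ ^ 2 < η := by
      have h2 : r₁ ^ 2 < η / B := lt_of_lt_of_le hr₁sq (min_le_left _ _)
      calc B * r₁ ^ 2 < B * (η / B) := mul_lt_mul_of_pos_left h2 hB
        _ = η := by field_simp
    have hcr : c * r₁ ^ 2 < min εs δ := by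
      have h2 : r₁ ^ 2 < min εs δ / c := lt_of_lt_of_le hr₁sq (min_le_right _ _)
      calc c * r₁ ^ 2 < c * (min εs δ / c) := mul_lt_mul_of_pos_left h2 hc0
        _ = min εs δ := by field_simp
    have hεεs : ε ≤ εs := le_trans he1 (le_trans hcr.le (min_le_left _ _))
    have hεδ : ε ≤ δ := le_trans he1 (le_trans hcr.le (min_le_right _ _))
    refine ⟨hεεs, ?_⟩
    have hT' : T (τ₀ + ε) < S + η := by
      have h3 := abs_lt.mp (hδ ε he0 hεδ)
      linarith [h3.2]
    have hψ : psi (b 1) (τ₀ + ε) ≤ -(8 * Real.pi ^ 2 / ((b 1) ^ 2 * ε)) + B := by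
      have h3 := (abs_le.mp (hpole ε he0 hεεs)).2
      linarith
    have h8 : 8 * Real.pi ^ 2 / ((b 1) ^ 2 * c)
        ≤ r₁ ^ 2 * (8 * Real.pi ^ 2 / ((b 1) ^ 2 * ε)) := by
      have heq : r₁ ^ 2 * (8 * Real.pi ^ 2 / ((b 1) ^ 2 * ε))
          = (r₁ ^ 2 * (8 * Real.pi ^ 2)) / ((b 1) ^ 2 * ε) := by ring
      rw [heq, div_le_div_iff₀ (by positivity) (by positivity)]
      have h4 := mul_le_mul_of_nonneg_right he1
        (show (0:ℝ) ≤ 8 * Real.pi ^ 2 * (b 1) ^ 2 by positivity)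
      nlinarith
    have hψr : r₁ ^ 2 * psi (b 1) (τ₀ + ε)
        ≤ r₁ ^ 2 * (-(8 * Real.pi ^ 2 / ((b 1) ^ 2 * ε)) + B) :=
      mul_le_mul_of_nonneg_left hψ (sq_nonneg r₁)
    have hTval : (∑ i ∈ Finset.Icc 2 n, r i ^ 2 * psi (b i) (τ₀ + ε)) = T (τ₀ + ε) := rfl
    rw [psiSum_decomp n hn b r r₁ (τ₀ + ε), hTval]
    clear_value T S B η m f εs
    linarith [hψr, h8, hBr, hT']
  -- helper U : positivity of psiSum at τ₀ + c' r₁²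
  have helperU : ∀ c' : ℝ, f < c' → ∃ ρ : ℝ, 0 < ρ ∧
      ∀ r₁ : ℝ, 0 < r₁ → r₁ < ρ →
        c' * r₁ ^ 2 ≤ εs ∧ 0 < psiSum n b (Function.update r 1 r₁) (τ₀ + c' * r₁ ^ 2) := by
    intro c' hfc'
    have hc'0 : 0 < c' := lt_trans hf hfc'
    have h9 : 8 * Real.pi ^ 2 < c' * ((b 1) ^ 2 * S) := by
      rw [hfdef] at hfc'
      exact (div_lt_iff₀ (by positivity)).mp hfc'
    have hKc' : 8 * Real.pi ^ 2 / ((b 1) ^ 2 * c') < S := by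
      rw [div_lt_iff₀ (by positivity)]
      nlinarith [h9]
    set η : ℝ := (S - 8 * Real.pi ^ 2 / ((b 1) ^ 2 * c')) / 2 with hηdef
    have hη : 0 < η := by rw [hηdef]; linarith
    obtain ⟨δ, hδ0, hδ⟩ := hTwin η hη
    set m : ℝ := min (η / B) (min εs δ / c') with hmdef
    have hm : 0 < m := lt_min (by positivity) (by positivity)
    refine ⟨Real.sqrt m, Real.sqrt_pos.mpr hm, ?_⟩
    intro r₁ h0 h1
    have hr₁sq : r₁ ^ 2 < m := (Real.lt_sqrt h0.le).mp h1
    have hBr : B * r₁ ^ 2 < η := by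
      have h2 : r₁ ^ 2 < η / B := lt_of_lt_of_le hr₁sq (min_le_left _ _)
      calc B * r₁ ^ 2 < B * (η / B) := mul_lt_mul_of_pos_left h2 hB
        _ = η := by field_simp
    have hcr : c' * r₁ ^ 2 < min εs δ := by
      have h2 : r₁ ^ 2 < min εs δ / c' := lt_of_lt_of_le hr₁sq (min_le_right _ _)
      calc c' * r₁ ^ 2 < c' * (min εs δ / c') := mul_lt_mul_of_pos_left h2 hc'0
        _ = min εs δ := by field_simp
    set ε : ℝ := c' * r₁ ^ 2 with hεdef
    have hε0 : 0 < ε := by rw [hεdef]; positivity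
    have hεεs : ε ≤ εs := le_trans hcr.le (min_le_left _ _)
    have hεδ : ε ≤ δ := le_trans hcr.le (min_le_right _ _)
    refine ⟨hεεs, ?_⟩
    have hT' : S - η < T (τ₀ + ε) := by
      have h3 := abs_lt.mp (hδ ε hε0 hεδ)
      linarith [h3.1]
    have hψ : -(8 * Real.pi ^ 2 / ((b 1) ^ 2 * ε)) - B ≤ psi (b 1) (τ₀ + ε) := by
      have h3 := (abs_le.mp (hpole ε hε0 hεεs)).1
      linarith
    have h8eq : r₁ ^ 2 * (8 * Real.pi ^ 2 / ((b 1) ^ 2 * ε))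
        = 8 * Real.pi ^ 2 / ((b 1) ^ 2 * c') := by
      rw [hεdef]; field_simp
    have hψr : r₁ ^ 2 * (-(8 * Real.pi ^ 2 / ((b 1) ^ 2 * ε)) - B)
        ≤ r₁ ^ 2 * psi (b 1) (τ₀ + ε) :=
      mul_le_mul_of_nonneg_left hψ (sq_nonneg r₁)
    have hTval : (∑ i ∈ Finset.Icc 2 n, r i ^ 2 * psi (b i) (τ₀ + ε)) = T (τ₀ + ε) := rfl
    rw [psiSum_decomp n hn b r r₁ (τ₀ + ε), hTval]
    clear_value T S B η m f εs
    linarith [hψr, h8eq, hBr, hT']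
  -- facts about update
  have hrr : ∀ r₁ : ℝ, 0 < r₁ → ∀ i ∈ Finset.Icc 1 n, 0 < Function.update r 1 r₁ i := by
    intro r₁ h0 i hi
    rcases eq_or_ne i 1 with h | h
    · rw [h, Function.update_self]; exact h0
    · rw [Function.update_of_ne h]
      refine hr i ?_
      simp only [Finset.mem_Icc] at *; omega
  -- lower bound on tau1 : it exceeds τ₀ + c r₁² eventually
  rw [tendsto_order]
  constructor
  · intro a ha
    set c : ℝ := (max a 0 + f) / 2 with hcdef
    have hmaxf : max a 0 < f := max_lt ha hf
    have hc0 : 0 < c := by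
      have := le_max_right a 0; rw [hcdef]; linarith
    have hcf : c < f := by rw [hcdef]; linarith
    have hac : a < c := by
      have := le_max_left a 0; rw [hcdef]; linarith
    obtain ⟨ρ, hρ0, hL⟩ := helperL c hc0 hcf
    filter_upwards [Ioo_mem_nhdsGT_of_mem (Set.left_mem_Ico.mpr hρ0)] with r₁ hr₁
    obtain ⟨h0, h1⟩ := hr₁
    obtain ⟨⟨ht0, htsin, htzero⟩, hmin⟩ := htau1 _ (hrr r₁ h0)
    set t := tau1 (Function.update r 1 r₁) with htdef
    have hkey : τ₀ + c * r₁ ^ 2 < t := by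
      by_contra hcon
      push_neg at hcon
      rcases lt_trichotomy t τ₀ with h | h | h
      · have hpos' : 0 < psiSum n b (Function.update r 1 r₁) t := by
          refine psiSum_pos (by omega) ht0 hpos (hrr r₁ h0) fun i hi => ?_
          calc b i * t ≤ b 1 * t := mul_le_mul_of_nonneg_right (hble i hi) ht0.le
            _ < b 1 * τ₀ := mul_lt_mul_of_pos_left h hb1
            _ = 2 * Real.pi := hb1τ₀
        exact absurd htzero hpos'.ne'
      · refine htsin 1 h1mem ?_
        rw [h, show b 1 * τ₀ / 2 = Real.pi by linarith [hb1τ₀]]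
        exact Real.sin_pi
      · have hneg := hL r₁ h0 h1 (t - τ₀) (by linarith) (by linarith)
        rw [show τ₀ + (t - τ₀) = t by ring] at hneg
        exact absurd htzero hneg.2.ne
    have : c < (t - τ₀) / r₁ ^ 2 := by
      rw [lt_div_iff₀ (by positivity)]; linarith
    linarith
  · intro a ha
    set c' : ℝ := (f + a) / 2 with hc'def
    have hfc' : f < c' := by rw [hc'def]; linarith
    have hc'a : c' < a := by rw [hc'def]; linarith
    have hf2 : 0 < f / 2 := by positivity
    obtain ⟨ρ₁, hρ₁0, hL⟩ := helperL (f / 2) hf2 (by linarith)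
    obtain ⟨ρ₂, hρ₂0, hU⟩ := helperU c' hfc'
    filter_upwards [Ioo_mem_nhdsGT_of_mem (Set.left_mem_Ico.mpr (lt_min hρ₁0 hρ₂0))]
      with r₁ hr₁
    obtain ⟨h0, h1⟩ := hr₁
    have h1a : r₁ < ρ₁ := lt_of_lt_of_le h1 (min_le_left _ _)
    have h1b : r₁ < ρ₂ := lt_of_lt_of_le h1 (min_le_right _ _)
    obtain ⟨hεU, hposU⟩ := hU r₁ h0 h1b
    have hnegL := hL r₁ h0 h1a (f / 2 * r₁ ^ 2) (by positivity) le_rfl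
    obtain ⟨⟨ht0, htsin, htzero⟩, hmin⟩ := htau1 _ (hrr r₁ h0)
    set t := tau1 (Function.update r 1 r₁) with htdef
    set a1 : ℝ := τ₀ + f / 2 * r₁ ^ 2 with ha1def
    set a2 : ℝ := τ₀ + c' * r₁ ^ 2 with ha2def
    have ha12 : a1 ≤ a2 := by
      have : f / 2 * r₁ ^ 2 ≤ c' * r₁ ^ 2 := by nlinarith
      rw [ha1def, ha2def]; linarith
    have hcont : ContinuousOn (psiSum n b (Function.update r 1 r₁)) (Set.Icc a1 a2) := by
      intro τ hτ
      have hfr : 0 < f / 2 * r₁ ^ 2 := by positivity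
      have hτ1 : 0 < τ - τ₀ := by
        have h4 : τ₀ + f / 2 * r₁ ^ 2 ≤ τ := hτ.1
        linarith
      have hτ2 : τ - τ₀ ≤ εs := by
        have := hτ.2; rw [ha2def] at this
        have h5 : τ ≤ τ₀ + c' * r₁ ^ 2 := this
        linarith
      refine (psiSum_contAt fun i hi => ?_).continuousWithinAt
      have := hsinwin (τ - τ₀) hτ1 hτ2 i hi
      rwa [show τ₀ + (τ - τ₀) = τ by ring] at this
    have h0mem : (0:ℝ) ∈ Set.Icc (psiSum n b (Function.update r 1 r₁) a1)
        (psiSum n b (Function.update r 1 r₁) a2) := ⟨hnegL.2.le, hposU.le⟩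
    obtain ⟨τs, hτsmem, hτseq⟩ := intermediate_value_Icc ha12 hcont h0mem
    have hτs0 : 0 < τs := lt_of_lt_of_le (by rw [ha1def]; positivity) hτsmem.1
    have hτssin : ∀ i ∈ Finset.Icc 1 n, Real.sin (b i * τs / 2) ≠ 0 := by
      intro i hi
      have hε1 : 0 < τs - τ₀ := by
        have hfr : 0 < f / 2 * r₁ ^ 2 := by positivity
        have h4 : τ₀ + f / 2 * r₁ ^ 2 ≤ τs := hτsmem.1
        linarith
      have hε2 : τs - τ₀ ≤ εs := by
        have := hτsmem.2; rw [ha2def] at this; linarith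
      have := hsinwin (τs - τ₀) hε1 hε2 i hi
      rwa [show τ₀ + (τs - τ₀) = τs by ring] at this
    have htle : t ≤ τs := hmin ⟨hτs0, hτssin, hτseq.symm ▸ hτseq⟩
    have hta2 : t ≤ a2 := le_trans htle hτsmem.2
    have : (t - τ₀) / r₁ ^ 2 ≤ c' := by
      rw [div_le_iff₀ (by positivity)]
      rw [ha2def] at hta2; linarith
    linarith
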